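/- Let W : ℝ → [0,∞) satisfy hypotheses (w1)–(w4), let q > 0 with q < √(2W''(1)), and set γ := (1/2)(−q + √(2W''(1)))^{1/2}, δ := (1/2)(q + √(2W''(1)))^{1/2}. Then there exist constants ρ₀ > 0 and C > 0, depending only on W and q, such that for every s ∈ {−1, 1}, every 0 < ρ ≤ ρ₀ and all a, b ∈ ℝ with |a|, |b| ≤ ρ, the function η(x) := s + a e^{−γx} cos(δx) + b e^{−γx} sin(δx) satisfies |η(x) − s| + |η'(x)| + |η''(x)| ≤ C ρ e^{−γx} for all x > 0 and E(η; (0,∞)) = ∫₀^∞ ( W(η) − q(η')² + (η'')² ) dx ≤ C ρ². -/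

import Mathlib

open MeasureTheory Real


noncomputable def ecs (γ δ a b x : ℝ) : ℝ :=
  a * Real.exp (-γ * x) * Real.cos (δ * x) + b * Real.exp (-γ * x) * Real.sin (δ * x)

lemma ecs_hasDerivAt (γ δ a b x : ℝ) :
    HasDerivAt (fun x => ecs γ δ a b x)
      (ecs γ δ (-γ * a + δ * b) (-(δ * a) - γ * b) x) x := by
  have hlin : HasDerivAt (fun x : ℝ => -γ * x) (-γ) x := by
    simpa using (hasDerivAt_id x).const_mul (-γ)
  have hlin2 : HasDerivAt (fun x : ℝ => δ * x) δ x := by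
    simpa using (hasDerivAt_id x).const_mul δ
  have he := hlin.exp
  have hc := hlin2.cos
  have hsn := hlin2.sin
  have H := ((he.const_mul a).mul hc).add ((he.const_mul b).mul hsn)
  exact H.congr_deriv (by unfold ecs; ring)

lemma ecs_deriv (γ δ a b : ℝ) :
    deriv (fun x => ecs γ δ a b x)
      = fun x => ecs γ δ (-γ * a + δ * b) (-(δ * a) - γ * b) x :=
  funext fun x => (ecs_hasDerivAt γ δ a b x).deriv

lemma ecs_deriv_const_add (γ δ a b s : ℝ) :
    deriv (fun x => s + ecs γ δ a b x)
      = fun x => ecs γ δ (-γ * a + δ * b) (-(δ * a) - γ * b) x :=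
  funext fun x => ((ecs_hasDerivAt γ δ a b x).const_add s).deriv

lemma ecs_continuous (γ δ a b : ℝ) : Continuous (fun x => ecs γ δ a b x) := by
  unfold ecs; fun_prop

lemma abs_ecs_le {a b A B : ℝ} (γ δ x : ℝ) (ha : |a| ≤ A) (hb : |b| ≤ B) :
    |ecs γ δ a b x| ≤ (A + B) * Real.exp (-γ * x) := by
  unfold ecs
  have hE := Real.exp_pos (-γ * x)
  have h1 : |a * Real.exp (-γ * x) * Real.cos (δ * x)| ≤ A * Real.exp (-γ * x) := by
    rw [abs_mul, abs_mul, Real.abs_exp]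
    nlinarith [Real.abs_cos_le_one (δ * x), abs_nonneg a, abs_nonneg (Real.cos (δ * x)),
      mul_le_mul_of_nonneg_left (Real.abs_cos_le_one (δ * x))
        (mul_nonneg (abs_nonneg a) hE.le),
      mul_le_mul_of_nonneg_right ha hE.le]
  have h2 : |b * Real.exp (-γ * x) * Real.sin (δ * x)| ≤ B * Real.exp (-γ * x) := by
    rw [abs_mul, abs_mul, Real.abs_exp]
    nlinarith [Real.abs_sin_le_one (δ * x), abs_nonneg b, abs_nonneg (Real.sin (δ * x)),
      mul_le_mul_of_nonneg_left (Real.abs_sin_le_one (δ * x))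
        (mul_nonneg (abs_nonneg b) hE.le),
      mul_le_mul_of_nonneg_right hb hE.le]
  calc |_ + _| ≤ _ + _ := abs_add_le _ _
    _ ≤ (A + B) * Real.exp (-γ * x) := by linarith

lemma coeff_bound {γ δ a b ρ : ℝ} (hγ : 0 < γ) (hδ : 0 < δ) (ha : |a| ≤ ρ) (hb : |b| ≤ ρ) :
    |(-γ * a + δ * b)| ≤ (γ + δ) * ρ ∧ |(-(δ * a) - γ * b)| ≤ (γ + δ) * ρ := by
  constructor
  · calc |(-γ * a + δ * b)| ≤ |(-γ * a)| + |δ * b| := abs_add_le _ _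
      _ = γ * |a| + δ * |b| := by
        rw [abs_mul, abs_mul, abs_neg, abs_of_pos hγ, abs_of_pos hδ]
      _ ≤ (γ + δ) * ρ := by nlinarith [abs_nonneg a, abs_nonneg b]
  · calc |(-(δ * a) - γ * b)| = |(-(δ * a)) + (-(γ * b))| := by ring_nf
      _ ≤ |(-(δ * a))| + |(-(γ * b))| := abs_add_le _ _
      _ = δ * |a| + γ * |b| := by
        rw [abs_neg, abs_neg, abs_mul, abs_mul, abs_of_pos hγ, abs_of_pos hδ]
      _ ≤ (γ + δ) * ρ := by nlinarith [abs_nonneg a, abs_nonneg b]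

lemma quad_bound {W : ℝ → ℝ} (hdW : Differentiable ℝ W) (hdW' : Differentiable ℝ (deriv W))
    (s L : ℝ) (hWs : W s = 0) (hW's : deriv W s = 0)
    (hL : ∀ u ∈ Metric.closedBall s 1, |deriv (deriv W) u| ≤ L) :
    ∀ t, |t - s| ≤ 1 → W t ≤ L * (t - s) ^ 2 := by
  have hL0 : 0 ≤ L := le_trans (abs_nonneg _) (hL s (Metric.mem_closedBall_self zero_le_one))
  have key1 : ∀ u ∈ Metric.closedBall s 1, |deriv W u| ≤ L * |u - s| := by
    intro u hu
    have h := Convex.norm_image_sub_le_of_norm_deriv_le (f := deriv W) (s := Metric.closedBall s 1)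
      (fun x _ => hdW' x) (fun x hx => hL x hx) (convex_closedBall _ _)
      (Metric.mem_closedBall_self zero_le_one) hu
    simpa [hW's, Real.norm_eq_abs] using h
  intro t ht
  have hsub : Metric.closedBall s |t - s| ⊆ Metric.closedBall s 1 :=
    Metric.closedBall_subset_closedBall ht
  have htm : t ∈ Metric.closedBall s |t - s| := by
    simp [Metric.mem_closedBall, Real.dist_eq]
  have key2 := Convex.norm_image_sub_le_of_norm_deriv_le (f := W) (s := Metric.closedBall s |t - s|)
    (fun x _ => hdW x)
    (fun x hx => by
      have hx' : |x - s| ≤ |t - s| := by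
        simpa [Metric.mem_closedBall, Real.dist_eq] using hx
      calc ‖deriv W x‖ = |deriv W x| := Real.norm_eq_abs _
        _ ≤ L * |x - s| := key1 x (hsub hx)
        _ ≤ L * |t - s| := by nlinarith)
    (convex_closedBall _ _) (Metric.mem_closedBall_self (abs_nonneg _)) htm
  rw [hWs, sub_zero, Real.norm_eq_abs, Real.norm_eq_abs] at key2
  calc W t ≤ |W t| := le_abs_self _
    _ ≤ L * |t - s| * |t - s| := key2
    _ = L * |t - s| ^ 2 := by ring
    _ = L * (t - s) ^ 2 := by rw [sq_abs]

/-- Hypotheses (w1)–(w4) on the double-well potential. -/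
def DoubleWell (W : ℝ → ℝ) : Prop :=
  ContDiff ℝ 5 W ∧ (∀ s, W s = W (-s)) ∧ (∀ s, 0 ≤ W s) ∧
  (∀ s, 0 ≤ s → s ≠ 1 → 0 < W s) ∧ W 1 = 0 ∧ deriv W 1 = 0 ∧
  ∃ cW : ℝ, 0 < cW ∧ cW ≤ 1 ∧ ∀ s, 0 ≤ s → cW * |s - 1|^2 ≤ W s

set_option maxHeartbeats 1000000 in
theorem stmt17 (W : ℝ → ℝ) (hW : DoubleWell W)
    (q : ℝ) (hq0 : 0 < q) (hq : q < Real.sqrt (2 * deriv (deriv W) 1))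
    (γ δ : ℝ)
    (hγ : γ = (1/2) * Real.sqrt (-q + Real.sqrt (2 * deriv (deriv W) 1)))
    (hδ : δ = (1/2) * Real.sqrt (q + Real.sqrt (2 * deriv (deriv W) 1))) :
    ∃ ρ₀ > (0:ℝ), ∃ C > (0:ℝ),
      ∀ s : ℝ, (s = -1 ∨ s = 1) → ∀ ρ : ℝ, 0 < ρ → ρ ≤ ρ₀ →
      ∀ a b : ℝ, |a| ≤ ρ → |b| ≤ ρ →
      ∀ η : ℝ → ℝ,
      (η = fun x => s + a * Real.exp (-γ * x) * Real.cos (δ * x)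
          + b * Real.exp (-γ * x) * Real.sin (δ * x)) →
      (∀ x : ℝ, 0 < x →
        |η x - s| + |deriv η x| + |deriv (deriv η) x| ≤ C * ρ * Real.exp (-γ * x)) ∧
      (∫ x in Set.Ioi (0:ℝ),
          (W (η x) - q * (deriv η x)^2 + (deriv (deriv η) x)^2)) ≤ C * ρ^2 := by
  obtain ⟨hW5, hsym, hWnn, -, hW1, hW'1, -⟩ := hW
  -- positivity of γ and δ
  have hsq : 0 < Real.sqrt (2 * deriv (deriv W) 1) := lt_of_le_of_lt hq0.le hq
  have hγpos : 0 < γ := by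
    rw [hγ]
    have h1 : 0 < -q + Real.sqrt (2 * deriv (deriv W) 1) := by linarith
    have := Real.sqrt_pos.mpr h1
    linarith
  have hδpos : 0 < δ := by
    rw [hδ]
    have h1 : 0 < q + Real.sqrt (2 * deriv (deriv W) 1) := by linarith
    have := Real.sqrt_pos.mpr h1
    linarith
  have hPpos : 0 < γ + δ := by linarith
  -- regularity
  rw [show (5 : WithTop ℕ∞) = 4 + 1 from by norm_num] at hW5
  have hdW : Differentiable ℝ W := hW5.differentiable (by norm_num)
  have h4 : ContDiff ℝ 4 (deriv W) := (contDiff_succ_iff_deriv.mp hW5).2.2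
  rw [show (4 : WithTop ℕ∞) = 3 + 1 from by norm_num] at h4
  have hdW' : Differentiable ℝ (deriv W) := h4.differentiable (by norm_num)
  have hcont2 : Continuous (deriv (deriv W)) :=
    ((contDiff_succ_iff_deriv.mp h4).2.2).continuous
  -- values at -1
  have hWneg : W (-1) = 0 := by rw [← hsym 1]; exact hW1
  have hW'neg : deriv W (-1) = 0 := by
    have h1 : deriv W (-1) = deriv (fun x => W (-x)) (-1) := by
      congr 1; funext x; exact hsym x
    rw [h1, deriv_comp_neg, neg_neg, hW'1, neg_zero]
  -- the constant L
  obtain ⟨z, hz, hzmax⟩ := isCompact_Icc.exists_isMaxOn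
    (Set.nonempty_Icc.mpr (by norm_num : (-2:ℝ) ≤ 2))
    ((continuous_abs.comp hcont2).continuousOn)
  set L : ℝ := |deriv (deriv W) z| + 1 with hLdef
  have hLpos : 0 < L := by positivity
  have hQB : ∀ s : ℝ, (s = -1 ∨ s = 1) → ∀ t, |t - s| ≤ 1 → W t ≤ L * (t - s) ^ 2 := by
    intro s hs
    refine quad_bound hdW hdW' s L ?_ ?_ ?_
    · rcases hs with rfl | rfl
      exacts [hWneg, hW1]
    · rcases hs with rfl | rfl
      exacts [hW'neg, hW'1]
    · intro u hu
      have hu' : |u - s| ≤ 1 := by simpa [Metric.mem_closedBall, Real.dist_eq] using hu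
      have h2 : u ∈ Set.Icc (-2:ℝ) 2 := by
        rcases hs with rfl | rfl <;>
          (rcases abs_le.mp hu' with ⟨h1, h2⟩; constructor <;> linarith)
      have h3 := hzmax h2
      simp only [Set.mem_setOf_eq, Function.comp_apply] at h3
      linarith
  -- constants
  set I : ℝ := ∫ x in Set.Ioi (0:ℝ), Real.exp (-(2*γ) * x) with hIdef
  have hI0 : 0 ≤ I := integral_nonneg fun x => (Real.exp_pos _).le
  set M : ℝ := 4*L + 4*q*(γ+δ)^2 + 4*(γ+δ)^4 with hMdef
  have hMpos : 0 < M := by positivity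
  set C : ℝ := 2*(1 + (γ+δ) + (γ+δ)^2) + M * I + 1 with hCdef
  have hCpos : 0 < C := by positivity
  refine ⟨1/2, one_half_pos, C, hCpos, ?_⟩
  intro s hs ρ hρ hρ₀ a b ha hb η hη
  subst hη
  have hfeq : (fun x => s + a * Real.exp (-γ * x) * Real.cos (δ * x)
      + b * Real.exp (-γ * x) * Real.sin (δ * x)) = fun x => s + ecs γ δ a b x := by
    funext x; simp only [ecs]; ring
  rw [hfeq]
  have hd1 : deriv (fun x => s + ecs γ δ a b x)
      = fun x => ecs γ δ (-γ * a + δ * b) (-(δ * a) - γ * b) x :=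
    ecs_deriv_const_add γ δ a b s
  have hd2 : deriv (fun x => ecs γ δ (-γ * a + δ * b) (-(δ * a) - γ * b) x)
      = fun x => ecs γ δ (-γ * (-γ * a + δ * b) + δ * (-(δ * a) - γ * b))
          (-(δ * (-γ * a + δ * b)) - γ * (-(δ * a) - γ * b)) x :=
    ecs_deriv γ δ _ _
  -- coefficient bounds
  obtain ⟨hA1, hB1⟩ := coeff_bound hγpos hδpos ha hb
  obtain ⟨hA2, hB2⟩ := coeff_bound hγpos hδpos hA1 hB1
  -- pointwise bounds
  have hbnd0 : ∀ x : ℝ, |ecs γ δ a b x| ≤ 2 * ρ * Real.exp (-γ * x) := by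
    intro x
    calc |ecs γ δ a b x| ≤ (ρ + ρ) * Real.exp (-γ * x) := abs_ecs_le γ δ x ha hb
      _ = 2 * ρ * Real.exp (-γ * x) := by ring
  have hbnd1 : ∀ x : ℝ, |ecs γ δ (-γ * a + δ * b) (-(δ * a) - γ * b) x|
      ≤ 2 * (γ+δ) * ρ * Real.exp (-γ * x) := by
    intro x
    calc |ecs γ δ (-γ * a + δ * b) (-(δ * a) - γ * b) x|
        ≤ ((γ+δ) * ρ + (γ+δ) * ρ) * Real.exp (-γ * x) := abs_ecs_le γ δ x hA1 hB1
      _ = 2 * (γ+δ) * ρ * Real.exp (-γ * x) := by ring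
  have hbnd2 : ∀ x : ℝ, |ecs γ δ (-γ * (-γ * a + δ * b) + δ * (-(δ * a) - γ * b))
          (-(δ * (-γ * a + δ * b)) - γ * (-(δ * a) - γ * b)) x|
      ≤ 2 * (γ+δ)^2 * ρ * Real.exp (-γ * x) := by
    intro x
    calc |ecs γ δ (-γ * (-γ * a + δ * b) + δ * (-(δ * a) - γ * b))
          (-(δ * (-γ * a + δ * b)) - γ * (-(δ * a) - γ * b)) x|
        ≤ ((γ+δ) * ((γ+δ) * ρ) + (γ+δ) * ((γ+δ) * ρ)) * Real.exp (-γ * x) :=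
          abs_ecs_le γ δ x hA2 hB2
      _ = 2 * (γ+δ)^2 * ρ * Real.exp (-γ * x) := by ring
  constructor
  · -- pointwise estimate
    intro x hx
    simp only [hd1, hd2]
    have hE := Real.exp_pos (-γ * x)
    have h0 := hbnd0 x
    have h1 := hbnd1 x
    have h2 := hbnd2 x
    have heq : |s + ecs γ δ a b x - s| = |ecs γ δ a b x| := by
      congr 1; ring
    rw [heq]
    have hC1 : 2*(1 + (γ+δ) + (γ+δ)^2) ≤ C := by
      rw [hCdef]; nlinarith [mul_nonneg hMpos.le hI0]
    linarith [h0, h1, h2, mul_le_mul_of_nonneg_right hC1 (mul_nonneg hρ.le hE.le)]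
  · -- energy estimate
    simp only [hd1, hd2]
    set F : ℝ → ℝ := fun x =>
      W (s + ecs γ δ a b x)
        - q * (ecs γ δ (-γ * a + δ * b) (-(δ * a) - γ * b) x)^2
        + (ecs γ δ (-γ * (-γ * a + δ * b) + δ * (-(δ * a) - γ * b))
            (-(δ * (-γ * a + δ * b)) - γ * (-(δ * a) - γ * b)) x)^2 with hFdef
    set g : ℝ → ℝ := fun x => (M * ρ^2) * Real.exp (-(2*γ) * x) with hgdef
    have hgint : IntegrableOn g (Set.Ioi (0:ℝ)) :=
      (exp_neg_integrableOn_Ioi 0 (by positivity : (0:ℝ) < 2*γ)).const_mul (M * ρ^2)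
    have hFcont : Continuous F := by
      rw [hFdef]
      refine ((hW5.continuous.comp ?_).sub ?_).add ?_
      · exact continuous_const.add (ecs_continuous γ δ a b)
      · exact continuous_const.mul ((ecs_continuous γ δ _ _).pow 2)
      · exact (ecs_continuous γ δ _ _).pow 2
    have hbound : ∀ x : ℝ, 0 < x → |F x| ≤ g x := by
      intro x hx
      have hE : (0:ℝ) < Real.exp (-γ * x) := Real.exp_pos _
      have hE1 : Real.exp (-γ * x) ≤ 1 := by
        rw [← Real.exp_zero]
        exact Real.exp_le_exp.mpr (by nlinarith)
      have hEE : Real.exp (-(2*γ) * x) = Real.exp (-γ * x) * Real.exp (-γ * x) := by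
        rw [← Real.exp_add]; ring_nf
      have h0 := hbnd0 x
      have h1 := hbnd1 x
      have h2 := hbnd2 x
      have habs : |s + ecs γ δ a b x - s| ≤ 1 := by
        have he : |s + ecs γ δ a b x - s| = |ecs γ δ a b x| := by congr 1; ring
        rw [he]
        nlinarith
      have hWb : W (s + ecs γ δ a b x) ≤ L * (ecs γ δ a b x)^2 := by
        have hh := hQB s hs (s + ecs γ δ a b x) habs
        have he : (s + ecs γ δ a b x - s)^2 = (ecs γ δ a b x)^2 := by ring
        rw [he] at hh
        exact hh
      have hsq0 : (ecs γ δ a b x)^2 ≤ (2*ρ*Real.exp (-γ * x))^2 := by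
        rw [← sq_abs]; exact pow_le_pow_left₀ (abs_nonneg _) h0 2
      have hsq1 : (ecs γ δ (-γ * a + δ * b) (-(δ * a) - γ * b) x)^2
          ≤ (2*(γ+δ)*ρ*Real.exp (-γ * x))^2 := by
        rw [← sq_abs]; exact pow_le_pow_left₀ (abs_nonneg _) h1 2
      have hsq2 : (ecs γ δ (-γ * (-γ * a + δ * b) + δ * (-(δ * a) - γ * b))
            (-(δ * (-γ * a + δ * b)) - γ * (-(δ * a) - γ * b)) x)^2
          ≤ (2*(γ+δ)^2*ρ*Real.exp (-γ * x))^2 := by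
        rw [← sq_abs]; exact pow_le_pow_left₀ (abs_nonneg _) h2 2
      have hWnn' : 0 ≤ W (s + ecs γ δ a b x) := hWnn _
      have hq1nn : 0 ≤ q * (ecs γ δ (-γ * a + δ * b) (-(δ * a) - γ * b) x)^2 := by positivity
      have hq2nn : 0 ≤ (ecs γ δ (-γ * (-γ * a + δ * b) + δ * (-(δ * a) - γ * b))
            (-(δ * (-γ * a + δ * b)) - γ * (-(δ * a) - γ * b)) x)^2 := by positivity
      have hgx : g x = M * ρ^2 * (Real.exp (-γ * x) * Real.exp (-γ * x)) := by
        rw [hgdef]; simp only; rw [hEE]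
      rw [hgx, hFdef]
      simp only
      have hq1b := mul_le_mul_of_nonneg_left hsq1 hq0.le
      have hWb2 := le_trans hWb (mul_le_mul_of_nonneg_left hsq0 hLpos.le)
      have hz1 : (0:ℝ) ≤ 4*L*ρ^2*(Real.exp (-γ*x) * Real.exp (-γ*x)) := by positivity
      have hz2 : (0:ℝ) ≤ 4*(γ+δ)^4*ρ^2*(Real.exp (-γ*x) * Real.exp (-γ*x)) := by positivity
      have hz3 : (0:ℝ) ≤ 4*q*(γ+δ)^2*ρ^2*(Real.exp (-γ*x) * Real.exp (-γ*x)) := by positivity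
      rw [abs_le, hMdef]
      constructor
      · linarith [hWnn', hq2nn, hq1b, hz1, hz2]
      · linarith [hq1nn, hWb2, hsq2, hz3]
    have hFg : ∀ x : ℝ, 0 < x → F x ≤ g x :=
      fun x hx => le_trans (le_abs_self _) (hbound x hx)
    have hFint : IntegrableOn F (Set.Ioi (0:ℝ)) := by
      refine Integrable.mono' hgint hFcont.aestronglyMeasurable ?_
      refine (ae_restrict_iff' measurableSet_Ioi).mpr (ae_of_all _ fun x hx => ?_)
      rw [Real.norm_eq_abs]
      exact hbound x hx
    have hmono : (∫ x in Set.Ioi (0:ℝ), F x) ≤ ∫ x in Set.Ioi (0:ℝ), g x :=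
      integral_mono_ae hFint hgint
        ((ae_restrict_iff' measurableSet_Ioi).mpr (ae_of_all _ fun x hx => hFg x hx))
    have hgval : (∫ x in Set.Ioi (0:ℝ), g x) = (M * ρ^2) * I := by
      rw [hgdef, hIdef]
      exact MeasureTheory.integral_const_mul _ _
    calc (∫ x in Set.Ioi (0:ℝ), F x)
        ≤ ∫ x in Set.Ioi (0:ℝ), g x := hmono
      _ = (M * ρ^2) * I := hgval
      _ ≤ C * ρ^2 := by
          rw [hCdef]
          nlinarith [mul_nonneg (mul_nonneg hMpos.le (sq_nonneg ρ)) hI0, sq_nonneg ρ,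
            mul_nonneg (by positivity : (0:ℝ) ≤ 2*(1+(γ+δ)+(γ+δ)^2)) (sq_nonneg ρ)]
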